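/- Fix 0 ≤ t ≤ 1 and a positive integer s. For all positive reals r_1, …, r_s with r_1 r_2 ⋯ r_s = 1, one has ∑_{i=1}^s 1/(s − t + t r_i) ≤ 1, with equality when r_1 = ⋯ = r_s = 1. -/

import Mathlib

open Finset

/-- Classical inequality: if `x_1 ⋯ x_n = 1` with `x_i > 0`, then
`∑ 1/(n-1+x_i) ≤ 1`. -/
lemma key_ineq (n : ℕ) (hn : 1 ≤ n) (x : Fin n → ℝ) (hx : ∀ i, 0 < x i)
    (hprod : ∏ i, x i = 1) : ∑ i, 1 / ((n : ℝ) - 1 + x i) ≤ 1 := by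
  rcases eq_or_lt_of_le hn with h1 | h2
  · -- n = 1
    subst h1
    have : x 0 = 1 := by simpa using hprod
    simp [this]
  · -- n ≥ 2
    have hn2 : 2 ≤ n := h2
    have hnR : (2:ℝ) ≤ (n:ℝ) := by exact_mod_cast hn2
    have hn1 : (0:ℝ) < (n:ℝ) - 1 := by linarith
    have hn0 : (0:ℝ) < (n:ℝ) := by linarith
    haveI : Nonempty (Fin n) := ⟨⟨0, by omega⟩⟩
    set a : ℝ := ((n:ℝ) - 1) / n with ha
    set c : ℝ := ((n:ℝ) - 2) / ((n:ℝ) - 1) with hc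
    set y : Fin n → ℝ := fun i => x i ^ a with hy
    set z : Fin n → ℝ := fun i => y i ^ c with hz
    set d : Fin n → ℝ := fun i => ((n:ℝ) - 1) * z i + y i ^ 2 with hd
    have hypos : ∀ i, 0 < y i := fun i => Real.rpow_pos_of_pos (hx i) a
    have hzpos : ∀ i, 0 < z i := fun i => Real.rpow_pos_of_pos (hypos i) c
    have hdpos : ∀ i, 0 < d i := fun i => by
      have h1 := hypos i
      have h2 := hzpos i
      simp only [hd]
      nlinarith
    have hyprod : ∏ i, y i = 1 := by
      simp only [hy]
      rw [Real.finset_prod_rpow _ _ (fun i _ => (hx i).le), hprod, Real.one_rpow]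
    -- x i = y i ^ (n/(n-1))
    have hxy : ∀ i, x i = y i ^ ((n:ℝ) / ((n:ℝ) - 1)) := by
      intro i
      simp only [hy]
      rw [← Real.rpow_mul (hx i).le]
      rw [show a * ((n:ℝ) / ((n:ℝ) - 1)) = 1 by
        rw [ha]; field_simp]
      rw [Real.rpow_one]
    -- key identity: z i * x i = y i ^ 2
    have hzx : ∀ i, z i * x i = y i ^ 2 := by
      intro i
      have h2 : c + (n:ℝ)/((n:ℝ)-1) = 2 := by
        rw [hc]; field_simp; ring
      calc z i * x i = y i ^ c * y i ^ ((n:ℝ)/((n:ℝ)-1)) := by rw [← hxy i]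
        _ = y i ^ (c + (n:ℝ)/((n:ℝ)-1)) := (Real.rpow_add (hypos i) _ _).symm
        _ = y i ^ (2:ℝ) := by rw [h2]
        _ = y i ^ 2 := by
            rw [show (2:ℝ) = ((2:ℕ):ℝ) by norm_num, Real.rpow_natCast]
    -- AM-GM per index
    have amgm : ∀ i : Fin n, ((n:ℝ) - 1) * z i ≤ y i * ∑ j ∈ univ.erase i, y j := by
      intro i
      have hcardR : (((univ : Finset (Fin n)).erase i).card : ℝ) = (n:ℝ) - 1 := by
        rw [Finset.card_erase_of_mem (mem_univ i), Finset.card_univ, Fintype.card_fin,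
          Nat.cast_sub hn]
        simp
      have hw : ∑ _j ∈ univ.erase i, (1/((n:ℝ)-1)) = 1 := by
        rw [Finset.sum_const, nsmul_eq_mul, hcardR]
        field_simp
      have hgm := Real.geom_mean_le_arith_mean_weighted (univ.erase i)
        (fun _ => 1/((n:ℝ)-1)) y (fun _ _ => by positivity) hw (fun j _ => (hypos j).le)
      have hperase : ∏ j ∈ univ.erase i, y j = 1 / y i := by
        apply eq_one_div_of_mul_eq_one_left
        rw [Finset.prod_erase_mul univ y (mem_univ i), hyprod]
      rw [Real.finset_prod_rpow _ _ (fun j _ => (hypos j).le), hperase, ← Finset.mul_sum]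
        at hgm
      have hyz : y i * (1 / y i) ^ (1/((n:ℝ)-1)) = z i := by
        rw [one_div (y i), ← Real.rpow_neg_one (y i), ← Real.rpow_mul (hypos i).le]
        nth_rewrite 1 [← Real.rpow_one (y i)]
        rw [← Real.rpow_add (hypos i)]
        simp only [hz]
        congr 1
        rw [hc]
        field_simp
        ring
      have hmul := mul_le_mul_of_nonneg_left hgm
        (mul_nonneg hn1.le (hypos i).le)
      have e1 : ((n:ℝ)-1) * y i * ((1 / y i) ^ (1/((n:ℝ)-1))) = ((n:ℝ)-1) * z i := by
        rw [mul_assoc, hyz]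
      have e2 : ((n:ℝ)-1) * y i * (1/((n:ℝ)-1) * ∑ j ∈ univ.erase i, y j)
          = y i * ∑ j ∈ univ.erase i, y j := by
        rw [one_div, mul_mul_mul_comm, mul_inv_cancel₀ hn1.ne', one_mul]
      rw [e1, e2] at hmul
      exact hmul
    -- sum bound
    have hsum : ∑ i, d i ≤ (∑ i, y i)^2 := by
      have expand : (∑ i, y i)^2 = ∑ i, (y i^2 + y i * ∑ j ∈ univ.erase i, y j) := by
        rw [sq, Finset.sum_mul]
        apply Finset.sum_congr rfl
        intro i _
        rw [← Finset.add_sum_erase _ y (mem_univ i)]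
        ring
      rw [expand]
      apply Finset.sum_le_sum
      intro i _
      have := amgm i
      simp only [hd]
      linarith
    -- Cauchy-Schwarz (Engel form)
    have engel : (1:ℝ) ≤ ∑ i, y i^2 / d i := by
      have h1 := Finset.sq_sum_div_le_sum_sq_div univ y (fun i _ => hdpos i)
      have hdsum : 0 < ∑ i, d i := Finset.sum_pos (fun i _ => hdpos i) univ_nonempty
      have h2 : (1:ℝ) ≤ (∑ i, y i)^2 / ∑ i, d i := (one_le_div hdsum).mpr hsum
      linarith
    -- fraction identity
    have hfrac : ∀ i, y i^2 / d i = x i / ((n:ℝ)-1+x i) := by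
      intro i
      have hDpos : 0 < (n:ℝ)-1+x i := by nlinarith [hx i]
      rw [div_eq_div_iff (hdpos i).ne' hDpos.ne']
      have := hzx i
      simp only [hd]
      nlinarith
    have hT : (1:ℝ) ≤ ∑ i, x i / ((n:ℝ)-1+x i) := by
      calc (1:ℝ) ≤ ∑ i, y i^2/d i := engel
        _ = ∑ i, x i/((n:ℝ)-1+x i) := Finset.sum_congr rfl (fun i _ => hfrac i)
    have hsplit : ∀ i : Fin n, 1/((n:ℝ)-1+x i) = (1 - x i/((n:ℝ)-1+x i))/((n:ℝ)-1) := by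
      intro i
      have hDpos : 0 < (n:ℝ)-1+x i := by nlinarith [hx i]
      field_simp
      ring
    calc ∑ i, 1/((n:ℝ)-1+x i)
        = ∑ i, (1 - x i/((n:ℝ)-1+x i))/((n:ℝ)-1) :=
          Finset.sum_congr rfl (fun i _ => hsplit i)
      _ = ((n:ℝ) - ∑ i, x i/((n:ℝ)-1+x i))/((n:ℝ)-1) := by
          rw [← Finset.sum_div]
          congr 1
          rw [Finset.sum_sub_distrib, Finset.sum_const, Finset.card_univ, Fintype.card_fin]
          simp
      _ ≤ 1 := by
          rw [div_le_one hn1]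
          linarith

/-- for `0 ≤ t ≤ 1` and positive reals `r_1,…,r_s` with
`r_1 ⋯ r_s = 1`, one has `∑ 1/(s − t + t r_i) ≤ 1`, with equality when all
`r_i = 1`. -/
theorem stmt_14 {s : ℕ} (hs : 1 ≤ s) (t : ℝ) (ht0 : 0 ≤ t) (ht1 : t ≤ 1) :
    (∀ r : Fin s → ℝ, (∀ i, 0 < r i) → (∏ i, r i) = 1 →
      ∑ i, 1 / ((s : ℝ) - t + t * r i) ≤ 1) ∧
    (∑ _i : Fin s, 1 / ((s : ℝ) - t + t * 1)) = 1 := by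
  have hsR : (1:ℝ) ≤ (s:ℝ) := by exact_mod_cast hs
  constructor
  · intro r hr hprod
    set x : Fin s → ℝ := fun i => r i ^ t with hxdef
    have hx : ∀ i, 0 < x i := fun i => Real.rpow_pos_of_pos (hr i) t
    have hxprod : ∏ i, x i = 1 := by
      simp only [hxdef]
      rw [Real.finset_prod_rpow _ _ (fun i _ => (hr i).le), hprod, Real.one_rpow]
    have hterm : ∀ i, 1/((s:ℝ) - t + t * r i) ≤ 1/((s:ℝ) - 1 + x i) := by
      intro i
      have hpos : 0 < (s:ℝ) - 1 + x i := by nlinarith [hx i]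
      apply one_div_le_one_div_of_le hpos
      have amgm : x i ≤ 1 + t * (r i - 1) := by
        have hb := rpow_one_add_le_one_add_mul_self
          (show (-1:ℝ) ≤ r i - 1 by linarith [hr i]) ht0 ht1
        simpa only [add_sub_cancel] using hb
      linarith
    calc ∑ i, 1/((s:ℝ) - t + t * r i) ≤ ∑ i, 1/((s:ℝ) - 1 + x i) :=
          Finset.sum_le_sum (fun i _ => hterm i)
      _ ≤ 1 := key_ineq s hs x hx hxprod
  · have hden : (s:ℝ) - t + t * 1 = (s:ℝ) := by ring
    rw [hden, Finset.sum_const, Finset.card_univ, Fintype.card_fin, nsmul_eq_mul]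
    field_simp
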